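/- The evaluation map g ↦ (g(r_S))_{∅⊊S⊊[4]_0}, which evaluates a function g ∈ S^30 at the 30 ray generators r_S, is a linear isomorphism between S^30 and ℝ^30. In particular, S^30 is a 30-dimensional real vector space. -/

import Mathlib

open Finset

/-- Extend `x ∈ ℝ⁴` by the coordinate `x₀ = 0`, giving a vector indexed by `[4]₀ = {0,…,4}`. -/
noncomputable def ext (x : Fin 4 → ℝ) : Fin 5 → ℝ := Fin.cases 0 x

/-- The cell `C_π = {x ∈ ℝ⁴ : x_{π(0)} ≤ x_{π(1)} ≤ x_{π(2)} ≤ x_{π(3)} ≤ x_{π(4)}}` of the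
hyperplane arrangement `H` (with the convention `x₀ = 0`). -/
def cell (π : Equiv.Perm (Fin 5)) : Set (Fin 4 → ℝ) :=
  {x | ∀ i : Fin 4, ext x (π i.castSucc) ≤ ext x (π i.succ)}

/-- `g : ℝ⁴ → ℝ` is `H`-conforming: it is a positively homogeneous continuous function that
is linear on each cell `C_π` of the arrangement `H` (hence continuous piecewise linear). -/
def Hconforming (g : (Fin 4 → ℝ) → ℝ) : Prop :=
  Continuous g ∧ (∀ (lam : ℝ), 0 ≤ lam → ∀ x, g (lam • x) = lam * g x) ∧
    ∀ π : Equiv.Perm (Fin 5), ∃ a : Fin 4 → ℝ, ∀ x ∈ cell π, g x = ∑ j, a j * x j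

/-- The generator `r_S` of the ray `R_S`, for `∅ ⊊ S ⊊ [4]₀`: the 0/1 indicator vector of
the complement of `S` if `0 ∈ S`, and the 0/(−1) indicator vector of `S` if `0 ∉ S`. -/
noncomputable def ray (S : Finset (Fin 5)) : Fin 4 → ℝ := fun j =>
  if (0 : Fin 5) ∈ S then (if j.succ ∈ S then 0 else 1) else (if j.succ ∈ S then -1 else 0)

/-- `S³⁰`: the (sub)space of all `H`-conforming functions `ℝ⁴ → ℝ`. -/
def S30 : Submodule ℝ ((Fin 4 → ℝ) → ℝ) where
  carrier := {g | Hconforming g}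
  add_mem' := by
    rintro g h ⟨hgc, hgh, hgl⟩ ⟨hhc, hhh, hhl⟩
    refine ⟨hgc.add hhc, ?_, ?_⟩
    · intro lam hlam x
      simp only [Pi.add_apply, hgh lam hlam x, hhh lam hlam x]; ring
    · intro π
      obtain ⟨a, ha⟩ := hgl π
      obtain ⟨b, hb⟩ := hhl π
      refine ⟨a + b, fun x hx => ?_⟩
      simp only [Pi.add_apply, ha x hx, hb x hx, add_mul, Finset.sum_add_distrib]
  zero_mem' := ⟨continuous_const, by simp, fun π => ⟨0, by simp⟩⟩
  smul_mem' := by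
    rintro c g ⟨hgc, hgh, hgl⟩
    refine ⟨hgc.const_smul c, ?_, ?_⟩
    · intro lam hlam x
      simp only [Pi.smul_apply, smul_eq_mul, hgh lam hlam x]; ring
    · intro π
      obtain ⟨a, ha⟩ := hgl π
      refine ⟨c • a, fun x hx => ?_⟩
      simp only [Pi.smul_apply, smul_eq_mul, ha x hx, Finset.mul_sum]
      exact Finset.sum_congr rfl fun j _ => by ring

/-- The index set of the 30 rays: nonempty proper subsets of `[4]₀`. -/
def RayIdx : Type := {S : Finset (Fin 5) // S.Nonempty ∧ S ≠ Finset.univ}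

/-- The evaluation map `g ↦ (g(r_S))_{∅ ⊊ S ⊊ [4]₀}` on `S³⁰`, as a linear map. -/
noncomputable def evalRays : S30 →ₗ[ℝ] (RayIdx → ℝ) where
  toFun g := fun S => (g : (Fin 4 → ℝ) → ℝ) (ray S.1)
  map_add' g h := rfl
  map_smul' c g := rfl

/- ==================== auxiliary development ==================== -/

lemma ext_zero' (x : Fin 4 → ℝ) : ext x 0 = 0 := rfl
lemma ext_succ' (x : Fin 4 → ℝ) (j : Fin 4) : ext x j.succ = x j := by simp [_root_.ext]

/-- The extension of `ray S` to `Fin 5`, written uniformly. -/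
noncomputable def eray (S : Finset (Fin 5)) : Fin 5 → ℝ := fun i =>
  (if i ∈ S then 0 else 1) - (if (0 : Fin 5) ∈ S then 0 else 1)

lemma ext_ray (S : Finset (Fin 5)) : ext (ray S) = eray S := by
  funext i
  refine Fin.cases ?_ (fun j => ?_) i
  · simp only [_root_.ext, Fin.cases_zero, eray, sub_self]
  · simp only [_root_.ext, Fin.cases_succ, ray, eray]
    by_cases h0 : (0 : Fin 5) ∈ S <;> by_cases hj : j.succ ∈ S <;> simp [h0, hj]

lemma ext_smul (lam : ℝ) (x : Fin 4 → ℝ) (i : Fin 5) :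
    ext (lam • x) i = lam * ext x i := by
  refine Fin.cases ?_ (fun j => ?_) i <;> simp [_root_.ext]

lemma ext_eq_sum (x : Fin 4 → ℝ) (i : Fin 5) :
    ext x i = ∑ j : Fin 4, (if j.succ = i then (1 : ℝ) else 0) * x j := by
  refine Fin.cases ?_ (fun j0 => ?_) i
  · simp [_root_.ext, Fin.succ_ne_zero]
  · simp [_root_.ext, Fin.succ_inj, ite_mul]

lemma cell_mono {π : Equiv.Perm (Fin 5)} {x : Fin 4 → ℝ} (hx : x ∈ cell π) :
    Monotone fun k => ext x (π k) :=
  Fin.monotone_iff_le_succ.mpr hx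

lemma ext_continuous (i : Fin 5) : Continuous fun x : Fin 4 → ℝ => ext x i := by
  refine Fin.cases ?_ (fun j => ?_) i
  · exact continuous_const
  · simpa [_root_.ext] using continuous_apply j

/-- Monotone functions attain `sup'` at `max'`. -/
lemma sup'_monotone {T : Finset (Fin 5)} (hT : T.Nonempty) {f : Fin 5 → ℝ}
    (hf : Monotone f) : T.sup' hT f = f (T.max' hT) := by
  apply le_antisymm
  · exact Finset.sup'_le _ _ fun k hk => hf (Finset.le_max' T k hk)
  · exact Finset.le_sup' f (T.max'_mem hT)

lemma inf'_monotone {T : Finset (Fin 5)} (hT : T.Nonempty) {f : Fin 5 → ℝ}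
    (hf : Monotone f) : T.inf' hT f = f (T.min' hT) := by
  apply le_antisymm
  · exact Finset.inf'_le f (T.min'_mem hT)
  · exact Finset.le_inf' _ _ fun k hk => hf (Finset.min'_le T k hk)

/-- The basis function `f_S`. -/
noncomputable def fS (S : Finset (Fin 5)) : (Fin 4 → ℝ) → ℝ := fun x =>
  if h : S.Nonempty ∧ Sᶜ.Nonempty then
    max 0 ((Sᶜ.inf' h.2 fun i => ext x i) - (S.sup' h.1 fun i => ext x i))
  else 0

lemma fS_eq {S : Finset (Fin 5)} (h : S.Nonempty ∧ Sᶜ.Nonempty) (x : Fin 4 → ℝ) :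
    fS S x = max 0 ((Sᶜ.inf' h.2 fun i => ext x i) - (S.sup' h.1 fun i => ext x i)) := by
  rw [fS, dif_pos h]

lemma fS_continuous (S : Finset (Fin 5)) : Continuous (fS S) := by
  unfold fS
  split
  · next h =>
    exact continuous_const.max
      ((Continuous.finset_inf'_apply h.2 fun i _ => ext_continuous i).sub
        (Continuous.finset_sup'_apply h.1 fun i _ => ext_continuous i))
  · exact continuous_const

lemma fS_homog (S : Finset (Fin 5)) {lam : ℝ} (hlam : 0 ≤ lam) (x : Fin 4 → ℝ) :
    fS S (lam • x) = lam * fS S x := by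
  unfold fS
  split
  · next h =>
    have key : ∀ (s : Finset (Fin 5)) (hne : s.Nonempty),
        (s.inf' hne fun i => ext (lam • x) i) = lam * s.inf' hne fun i => ext x i := by
      intro s hne
      rw [Finset.apply_inf'_eq_inf'_comp hne (fun t : ℝ => lam * t)
        (fun a b => by simpa using mul_min_of_nonneg a b hlam)]
      exact Finset.inf'_congr hne rfl fun i _ => ext_smul lam x i
    have key2 : ∀ (s : Finset (Fin 5)) (hne : s.Nonempty),
        (s.sup' hne fun i => ext (lam • x) i) = lam * s.sup' hne fun i => ext x i := by
      intro s hne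
      rw [Finset.comp_sup'_eq_sup'_comp hne (fun t : ℝ => lam * t)
        (fun a b => by simpa using mul_max_of_nonneg a b hlam)]
      exact Finset.sup'_congr hne rfl fun i _ => ext_smul lam x i
    rw [key, key2, ← mul_sub, mul_max_of_nonneg _ _ hlam, mul_zero]
  · rw [mul_zero]

lemma fS_linear (S : Finset (Fin 5)) (π : Equiv.Perm (Fin 5)) :
    ∃ a : Fin 4 → ℝ, ∀ x ∈ cell π, fS S x = ∑ j, a j * x j := by
  by_cases h : S.Nonempty ∧ Sᶜ.Nonempty
  case neg => exact ⟨0, fun x _ => by simp [fS, h]⟩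
  have hE1 : (Sᶜ.image π.symm).Nonempty := h.2.image _
  have hE2 : (S.image π.symm).Nonempty := h.1.image _
  set kmin := (Sᶜ.image π.symm).min' hE1 with hkmin
  set kmax := (S.image π.symm).max' hE2 with hkmax
  have hinf : ∀ x ∈ cell π, (Sᶜ.inf' h.2 fun i => ext x i) = ext x (π kmin) := by
    intro x hx
    have h2 : (Sᶜ.image π.symm).inf' hE1 (fun k => ext x (π k))
        = Sᶜ.inf' h.2 fun i => ext x i := by
      rw [Finset.inf'_image hE1 (fun k => ext x (π k))]
      exact Finset.inf'_congr _ rfl fun i _ => by simp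
    rw [← h2, inf'_monotone hE1 (cell_mono hx)]
  have hsup : ∀ x ∈ cell π, (S.sup' h.1 fun i => ext x i) = ext x (π kmax) := by
    intro x hx
    have h2 : (S.image π.symm).sup' hE2 (fun k => ext x (π k))
        = S.sup' h.1 fun i => ext x i := by
      rw [Finset.sup'_image hE2 (fun k => ext x (π k))]
      exact Finset.sup'_congr _ rfl fun i _ => by simp
    rw [← h2, sup'_monotone hE2 (cell_mono hx)]
  rcases le_total kmin kmax with hk | hk
  · refine ⟨0, fun x hx => ?_⟩
    rw [fS_eq h, hinf x hx, hsup x hx,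
      max_eq_left (sub_nonpos.mpr (cell_mono hx hk))]
    simp
  · refine ⟨fun j => (if j.succ = π kmin then (1:ℝ) else 0)
      - (if j.succ = π kmax then (1:ℝ) else 0), fun x hx => ?_⟩
    rw [fS_eq h, hinf x hx, hsup x hx,
      max_eq_right (sub_nonneg.mpr (cell_mono hx hk))]
    beta_reduce
    rw [ext_eq_sum x (π kmin), ext_eq_sum x (π kmax), ← Finset.sum_sub_distrib]
    exact Finset.sum_congr rfl fun j _ => by ring

lemma fS_mem (S : Finset (Fin 5)) : fS S ∈ S30 :=
  ⟨fS_continuous S, fun lam hlam x => fS_homog S hlam x, fS_linear S⟩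

/-- The delta property of `f_S` at rays. -/
lemma fS_ray {S T : Finset (Fin 5)} (hS : S.Nonempty ∧ Sᶜ.Nonempty)
    (hT : T.Nonempty ∧ Tᶜ.Nonempty) :
    fS S (ray T) = if S = T then 1 else 0 := by
  have hvals : ∀ i : Fin 5, ext (ray T) i
      = (if i ∈ T then 0 else 1) - (if (0 : Fin 5) ∈ T then 0 else 1) := by
    intro i; rw [ext_ray]; rfl
  set c : ℝ := if (0 : Fin 5) ∈ T then 0 else 1 with hc
  split
  · next heq =>
    subst heq
    rw [fS_eq hS]
    have h1 : (Sᶜ.inf' hS.2 fun i => ext (ray S) i) = 1 - c :=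
      Finset.inf'_eq_of_forall _ _ fun i hi => by
        rw [hvals i, if_neg (Finset.mem_compl.mp hi)]
    have h2 : (S.sup' hS.1 fun i => ext (ray S) i) = 0 - c :=
      Finset.sup'_eq_of_forall _ _ fun i hi => by rw [hvals i, if_pos hi]
    rw [h1, h2]
    norm_num
  · next hne =>
    rw [fS_eq hS]
    have hle : (Sᶜ.inf' hS.2 fun i => ext (ray T) i)
        - (S.sup' hS.1 fun i => ext (ray T) i) ≤ 0 := by
      by_cases hsub : S ⊆ T
      · obtain ⟨j, hjT, hjS⟩ := Finset.exists_of_ssubset (hsub.ssubset_of_ne hne)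
        obtain ⟨i, hiS⟩ := hS.1
        have hA : (Sᶜ.inf' hS.2 fun i => ext (ray T) i) ≤ 0 - c := by
          refine le_trans (Finset.inf'_le _ (Finset.mem_compl.mpr hjS)) ?_
          rw [hvals j, if_pos hjT]
        have hB : (0 : ℝ) - c ≤ S.sup' hS.1 fun i => ext (ray T) i := by
          refine le_trans ?_ (Finset.le_sup' _ hiS)
          rw [hvals i, if_pos (hsub hiS)]
        linarith
      · obtain ⟨i, hiS, hiT⟩ := Finset.not_subset.mp hsub
        obtain ⟨j, hjS⟩ := hS.2
        have hA : (Sᶜ.inf' hS.2 fun i => ext (ray T) i) ≤ 1 - c := by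
          refine le_trans (Finset.inf'_le _ hjS) ?_
          rw [hvals j]
          split <;> simp
        have hB : (1 : ℝ) - c ≤ S.sup' hS.1 fun i => ext (ray T) i := by
          refine le_trans ?_ (Finset.le_sup' _ hiS)
          rw [hvals i, if_neg hiT]
        linarith
    exact max_eq_left hle

/- ==================== the flag decomposition ==================== -/

/-- The `k + 1` π-smallest elements of `Fin 5`. -/
def flag (π : Equiv.Perm (Fin 5)) (k : Fin 4) : Finset (Fin 5) :=
  Finset.univ.filter fun i => π.symm i ≤ k.castSucc

lemma mem_flag {π : Equiv.Perm (Fin 5)} {k : Fin 4} {i : Fin 5} :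
    i ∈ flag π k ↔ π.symm i ≤ k.castSucc := by simp [flag]

lemma flag_nonempty (π : Equiv.Perm (Fin 5)) (k : Fin 4) : (flag π k).Nonempty :=
  ⟨π 0, mem_flag.mpr (by simp [Fin.zero_le])⟩

lemma flag_ne_univ (π : Equiv.Perm (Fin 5)) (k : Fin 4) : flag π k ≠ Finset.univ := by
  intro hcon
  have : π (Fin.last 4) ∈ flag π k := hcon ▸ Finset.mem_univ _
  rw [mem_flag, Equiv.symm_apply_apply] at this
  exact absurd this (not_le.mpr (Fin.castSucc_lt_last k))

lemma compl_nonempty_of_ne_univ {S : Finset (Fin 5)} (h : S ≠ Finset.univ) :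
    Sᶜ.Nonempty := by
  rw [Finset.nonempty_iff_ne_empty, ← Finset.bot_eq_empty, Ne, compl_eq_bot,
    Finset.top_eq_univ]
  exact h

lemma flag_compl_nonempty (π : Equiv.Perm (Fin 5)) (k : Fin 4) : (flag π k)ᶜ.Nonempty :=
  compl_nonempty_of_ne_univ (flag_ne_univ π k)

lemma eray_flag (π : Equiv.Perm (Fin 5)) (k : Fin 4) (i : Fin 5) :
    eray (flag π k) i = (if π.symm i ≤ k.castSucc then (0:ℝ) else 1)
      - (if π.symm 0 ≤ k.castSucc then (0:ℝ) else 1) := by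
  simp [eray, mem_flag]

lemma ray_flag_mem_cell (π : Equiv.Perm (Fin 5)) (k : Fin 4) :
    ray (flag π k) ∈ cell π := by
  intro i
  have h1 := congrFun (ext_ray (flag π k)) (π i.castSucc)
  have h2 := congrFun (ext_ray (flag π k)) (π i.succ)
  rw [h1, h2, eray_flag, eray_flag, Equiv.symm_apply_apply, Equiv.symm_apply_apply]
  apply sub_le_sub_right
  split_ifs with ha hb hb2
  · exact le_refl _
  · norm_num
  · exact absurd (le_trans (Fin.castSucc_le_succ i) hb2) ha
  · exact le_refl _

lemma telescope (π : Equiv.Perm (Fin 5)) (x : Fin 4 → ℝ) (m : Fin 5) :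
    ∑ k : Fin 4, (if (k : ℕ) < (m : ℕ)
        then (ext x (π k.succ) - ext x (π k.castSucc)) else 0)
      = ext x (π m) - ext x (π 0) := by
  induction m using Fin.induction with
  | zero => simp
  | succ i ih =>
    have split : ∀ k : Fin 4, (if (k:ℕ) < (i.succ : Fin 5).val
          then (ext x (π k.succ) - ext x (π k.castSucc)) else 0)
        = (if (k:ℕ) < (i.castSucc : Fin 5).val
            then (ext x (π k.succ) - ext x (π k.castSucc)) else 0)
          + (if k = i then (ext x (π k.succ) - ext x (π k.castSucc)) else 0) := by
      intro k
      by_cases hk : k = i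
      · subst hk
        rw [if_pos (show (k:ℕ) < ((k.succ : Fin 5) : ℕ) by
              simp only [Fin.val_succ]; omega),
            if_neg (show ¬(k:ℕ) < ((k.castSucc : Fin 5) : ℕ) by
              simp only [Fin.coe_castSucc]; omega),
            if_pos rfl, zero_add]
      · have hk' : (k:ℕ) ≠ (i:ℕ) := fun hcon => hk (Fin.ext hcon)
        rw [if_neg hk, add_zero]
        refine if_congr ?_ rfl rfl
        simp only [Fin.val_succ, Fin.coe_castSucc]
        omega
    rw [Finset.sum_congr rfl fun k _ => split k, Finset.sum_add_distrib, ih,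
      Finset.sum_ite_eq' Finset.univ i, if_pos (Finset.mem_univ i)]
    ring

lemma decomp_ext (π : Equiv.Perm (Fin 5)) (x : Fin 4 → ℝ) (i : Fin 5) :
    ∑ k : Fin 4, (ext x (π k.succ) - ext x (π k.castSucc)) * eray (flag π k) i
      = ext x i := by
  have h1 : ∀ m : Fin 5, ∑ k : Fin 4, (ext x (π k.succ) - ext x (π k.castSucc)) *
      (if m ≤ k.castSucc then (0:ℝ) else 1) = ext x (π m) - ext x (π 0) := by
    intro m
    rw [← telescope π x m]
    refine Finset.sum_congr rfl fun k _ => ?_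
    rcases le_or_gt m k.castSucc with hle | hlt
    · rw [if_pos hle, mul_zero, if_neg]
      simp only [Fin.le_def, Fin.coe_castSucc] at hle
      omega
    · rw [if_neg (not_le.mpr hlt), mul_one, if_pos]
      simpa [Fin.lt_def, Fin.coe_castSucc] using hlt
  calc ∑ k : Fin 4, (ext x (π k.succ) - ext x (π k.castSucc)) * eray (flag π k) i
      = (∑ k : Fin 4, (ext x (π k.succ) - ext x (π k.castSucc)) *
            (if π.symm i ≤ k.castSucc then (0:ℝ) else 1))
        - ∑ k : Fin 4, (ext x (π k.succ) - ext x (π k.castSucc)) *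
            (if π.symm 0 ≤ k.castSucc then (0:ℝ) else 1) := by
        rw [← Finset.sum_sub_distrib]
        exact Finset.sum_congr rfl fun k _ => by rw [eray_flag]; ring
    _ = ext x i - 0 := by
        rw [h1 (π.symm i), h1 (π.symm 0), Equiv.apply_symm_apply, Equiv.apply_symm_apply]
        rw [ext_zero']
        ring
    _ = ext x i := by ring

lemma decomp (π : Equiv.Perm (Fin 5)) (x : Fin 4 → ℝ) (j : Fin 4) :
    x j = ∑ k : Fin 4,
      (ext x (π k.succ) - ext x (π k.castSucc)) * ray (flag π k) j := by
  have := decomp_ext π x j.succ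
  rw [ext_succ'] at this
  rw [← this]
  exact Finset.sum_congr rfl fun k _ => by
    rw [← congrFun (ext_ray (flag π k)) j.succ, ext_succ']

/- ==================== injectivity ==================== -/

lemma conforming_eq_zero {g : (Fin 4 → ℝ) → ℝ} (hg : Hconforming g)
    (h0 : ∀ S : Finset (Fin 5), S.Nonempty → S ≠ Finset.univ → g (ray S) = 0) :
    g = 0 := by
  funext x
  set π := Tuple.sort (ext x) with hπ
  have hcell : x ∈ cell π := fun i =>
    Tuple.monotone_sort (ext x) (Fin.castSucc_le_succ i)
  obtain ⟨a, ha⟩ := hg.2.2 π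
  have : g x = 0 := by
    calc g x = ∑ j, a j * x j := ha x hcell
      _ = ∑ j, ∑ k, a j * ((ext x (π k.succ) - ext x (π k.castSucc)) *
            ray (flag π k) j) := by
          refine Finset.sum_congr rfl fun j _ => ?_
          rw [← Finset.mul_sum, ← decomp π x j]
      _ = ∑ k, ∑ j, a j * ((ext x (π k.succ) - ext x (π k.castSucc)) *
            ray (flag π k) j) := Finset.sum_comm
      _ = ∑ k : Fin 4, (ext x (π k.succ) - ext x (π k.castSucc)) *
            ∑ j, a j * ray (flag π k) j := by
          refine Finset.sum_congr rfl fun k _ => ?_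
          rw [Finset.mul_sum]
          exact Finset.sum_congr rfl fun j _ => by ring
      _ = ∑ k : Fin 4, (ext x (π k.succ) - ext x (π k.castSucc)) *
            g (ray (flag π k)) := by
          refine Finset.sum_congr rfl fun k _ => ?_
          rw [ha _ (ray_flag_mem_cell π k)]
      _ = 0 := Finset.sum_eq_zero fun k _ => by
          rw [h0 _ (flag_nonempty π k) (flag_ne_univ π k), mul_zero]
  simpa using this

/- ==================== assembling ==================== -/

noncomputable instance : Fintype RayIdx :=
  inferInstanceAs (Fintype {S : Finset (Fin 5) // S.Nonempty ∧ S ≠ Finset.univ})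

lemma rayIdx_valid (S : RayIdx) : S.1.Nonempty ∧ S.1ᶜ.Nonempty :=
  ⟨S.2.1, compl_nonempty_of_ne_univ S.2.2⟩

lemma evalRays_injective : Function.Injective evalRays := by
  rw [injective_iff_map_eq_zero]
  intro g hg
  have h0 : ∀ S : Finset (Fin 5), S.Nonempty → S ≠ Finset.univ →
      (g : (Fin 4 → ℝ) → ℝ) (ray S) = 0 := by
    intro S h1 h2
    exact congrFun hg (⟨S, h1, h2⟩ : RayIdx)
  have := conforming_eq_zero g.2 h0
  exact Subtype.ext this

lemma evalRays_surjective : Function.Surjective evalRays := by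
  intro v
  refine ⟨∑ S : RayIdx, v S • (⟨fS S.1, fS_mem S.1⟩ : S30), ?_⟩
  funext T
  have hcoe : ((∑ S : RayIdx, v S • (⟨fS S.1, fS_mem S.1⟩ : S30) : S30) :
      (Fin 4 → ℝ) → ℝ) = ∑ S : RayIdx, v S • fS S.1 := by
    push_cast
    rfl
  show ((∑ S : RayIdx, v S • (⟨fS S.1, fS_mem S.1⟩ : S30) : S30) :
      (Fin 4 → ℝ) → ℝ) (ray T.1) = v T
  rw [hcoe]
  calc (∑ S : RayIdx, v S • fS S.1) (ray T.1)
      = ∑ S : RayIdx, (v S • fS S.1) (ray T.1) := Finset.sum_apply _ _ _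
    _ = (v T • fS T.1) (ray T.1) := by
        refine Finset.sum_eq_single T (fun S _ hST => ?_)
          (fun h => absurd (Finset.mem_univ T) h)
        rw [Pi.smul_apply, smul_eq_mul, fS_ray (rayIdx_valid S) (rayIdx_valid T),
          if_neg (fun hc => hST (Subtype.ext hc)), mul_zero]
    _ = v T := by
        rw [Pi.smul_apply, smul_eq_mul, fS_ray (rayIdx_valid T) (rayIdx_valid T),
          if_pos rfl, mul_one]


/-- the evaluation map `g ↦ (g(r_S))_S` at the 30 rays is a linear
isomorphism between `S³⁰` and `ℝ³⁰`; in particular `S³⁰` is a 30-dimensional real vector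
space. -/
theorem evalRays_bijective_and_finrank :
    Function.Bijective evalRays ∧
      Nat.card RayIdx = 30 ∧ Module.finrank ℝ S30 = 30 := by
  have hbij : Function.Bijective evalRays := ⟨evalRays_injective, evalRays_surjective⟩
  have hcard : Nat.card RayIdx = 30 := by
    rw [Nat.card_eq_fintype_card]
    show Fintype.card {S : Finset (Fin 5) // S.Nonempty ∧ S ≠ Finset.univ} = 30
    rw [Fintype.card_subtype]
    decide
  refine ⟨hbij, hcard, ?_⟩
  rw [(LinearEquiv.ofBijective evalRays hbij).finrank_eq, Module.finrank_pi,
    ← Nat.card_eq_fintype_card, hcard]
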